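/- Let σ₁ and σ₂ be rational polyhedral cones in ℝ^n such that τ = σ₁ ∩ σ₂ is a face of both σ₁ and σ₂. Then there exists m ∈ σ₁^∨ ∩ (−σ₂)^∨ such that τ = σ₁ ∩ H_m = σ₂ ∩ H_m, where H_m = {x ∈ ℝ^n : ⟨m,x⟩ = 0} (Separation Lemma). -/

import Mathlib

open Finset

/-- The canonical map `ℤ^n → ℝ^n`. -/
def coeR {n : ℕ} (x : Fin n → ℤ) : Fin n → ℝ := fun i => (x i : ℝ)

/-- The standard inner product on `ℝ^n`. -/
def innerR {n : ℕ} (m x : Fin n → ℝ) : ℝ := ∑ i, m i * x i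

/-- The rational polyhedral cone generated by the integer vectors `a 0, …, a (r-1)`. -/
def ratCone {n r : ℕ} (a : Fin r → Fin n → ℤ) : Set (Fin n → ℝ) :=
  {x | ∃ lam : Fin r → ℝ, (∀ i, 0 ≤ lam i) ∧ x = ∑ i, lam i • coeR (a i)}

/-- The dual cone of a subset of `ℝ^n`. -/
def dualCone {n : ℕ} (σ : Set (Fin n → ℝ)) : Set (Fin n → ℝ) :=
  {m | ∀ u ∈ σ, 0 ≤ innerR m u}

section ConeHull

variable {n : ℕ} {ι : Type} [Fintype ι]

/-- Cone generated by finitely many real vectors. -/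
def coneHull (v : ι → Fin n → ℝ) : Set (Fin n → ℝ) :=
  {x | ∃ lam : ι → ℝ, (∀ i, 0 ≤ lam i) ∧ x = ∑ i, lam i • v i}

lemma ratCone_eq {r : ℕ} (a : Fin r → Fin n → ℤ) :
    ratCone a = coneHull (fun i => coeR (a i)) := rfl

lemma innerR_add (m x y : Fin n → ℝ) : innerR m (x + y) = innerR m x + innerR m y := by
  simp [innerR, mul_add, Finset.sum_add_distrib]

lemma innerR_neg (m x : Fin n → ℝ) : innerR m (-x) = - innerR m x := by
  simp [innerR]

lemma innerR_smul (m x : Fin n → ℝ) (t : ℝ) : innerR m (t • x) = t * innerR m x := by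
  simp [innerR, Finset.mul_sum, mul_left_comm]

lemma innerR_sum {κ : Type} [Fintype κ] (m : Fin n → ℝ) (f : κ → Fin n → ℝ) :
    innerR m (∑ i, f i) = ∑ i, innerR m (f i) := by
  simp only [innerR, Finset.sum_apply, Finset.mul_sum]
  exact Finset.sum_comm

lemma innerR_sum_left {κ : Type} (s : Finset κ) (M : κ → Fin n → ℝ) (x : Fin n → ℝ) :
    innerR (∑ k ∈ s, M k) x = ∑ k ∈ s, innerR (M k) x := by
  simp only [innerR, Finset.sum_apply, Finset.sum_mul]
  exact Finset.sum_comm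

lemma coneHull_zero_mem (v : ι → Fin n → ℝ) : (0 : Fin n → ℝ) ∈ coneHull v :=
  ⟨0, fun _ => le_refl _, by simp⟩

lemma coneHull_add_mem {v : ι → Fin n → ℝ} {x y : Fin n → ℝ}
    (hx : x ∈ coneHull v) (hy : y ∈ coneHull v) : x + y ∈ coneHull v := by
  obtain ⟨l, hl, rfl⟩ := hx
  obtain ⟨l', hl', rfl⟩ := hy
  exact ⟨l + l', fun i => add_nonneg (hl i) (hl' i), by simp [add_smul, Finset.sum_add_distrib]⟩

lemma coneHull_smul_mem {v : ι → Fin n → ℝ} {x : Fin n → ℝ} {t : ℝ}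
    (ht : 0 ≤ t) (hx : x ∈ coneHull v) : t • x ∈ coneHull v := by
  obtain ⟨l, hl, rfl⟩ := hx
  exact ⟨fun i => t * l i, fun i => mul_nonneg ht (hl i),
    by simp [Finset.smul_sum, mul_smul]⟩

lemma coneHull_gen_mem (v : ι → Fin n → ℝ) (k : ι) : v k ∈ coneHull v := by
  classical
  refine ⟨fun i => if i = k then 1 else 0, fun i => by positivity, ?_⟩
  simp [ite_smul]

lemma coneHull_sum_mem {κ : Type} {s : Finset κ} {v : ι → Fin n → ℝ} (f : κ → Fin n → ℝ)
    (h : ∀ i ∈ s, f i ∈ coneHull v) : ∑ i ∈ s, f i ∈ coneHull v :=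
  Finset.sum_induction f (· ∈ coneHull v) (fun _ _ => coneHull_add_mem)
    (coneHull_zero_mem v) h

lemma coneHull_subtype_subset (v : ι → Fin n → ℝ) (S : Finset ι) :
    coneHull (fun i : S => v i.1) ⊆ coneHull v := by
  classical
  rintro x ⟨mu, hmu, rfl⟩
  refine coneHull_sum_mem _ fun i _ => coneHull_smul_mem (hmu i) (coneHull_gen_mem v i.1)

/-- Conic Carathéodory: every element of a finitely generated cone lies in the cone
generated by a linearly independent subfamily. -/
lemma coneHull_caratheodory (v : ι → Fin n → ℝ) {x : Fin n → ℝ} (hx : x ∈ coneHull v) :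
    ∃ S : Finset ι, LinearIndependent ℝ (fun i : S => v i.1) ∧
      x ∈ coneHull (fun i : S => v i.1) := by
  classical
  obtain ⟨lam, hlam, rfl⟩ := hx
  have main : ∀ k : ℕ, ∀ lam : ι → ℝ, (∀ i, 0 ≤ lam i) →
      (univ.filter (fun i => lam i ≠ 0)).card ≤ k →
      ∃ S : Finset ι, LinearIndependent ℝ (fun i : S => v i.1) ∧
        (∑ i, lam i • v i) ∈ coneHull (fun i : S => v i.1) := by
    intro k
    induction k using Nat.strong_induction_on with
    | _ k IH =>
      intro lam hlam hcard
      set T : Finset ι := univ.filter (fun i => lam i ≠ 0) with hT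
      have hsumT : ∑ i, lam i • v i = ∑ i ∈ T, lam i • v i := by
        refine (Finset.sum_subset T.subset_univ ?_).symm
        intro i _ hiT
        have : lam i = 0 := by
          by_contra h
          exact hiT (by simp [hT, h])
        simp [this]
      by_cases hLI : LinearIndependent ℝ (fun i : T => v i.1)
      · refine ⟨T, hLI, ⟨fun i => lam i.1, fun i => hlam i.1, ?_⟩⟩
        rw [hsumT, ← Finset.sum_attach T (fun i => lam i • v i), Finset.univ_eq_attach]
      · -- get a nontrivial relation with a positive coefficient
        obtain ⟨g, hg0, i₁, hi₁⟩ := Fintype.not_linearIndependent_iff.mp hLI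
        have hrel : ∃ gg : ι → ℝ, (∀ i, i ∉ T → gg i = 0) ∧
            (∑ i, gg i • v i = 0) ∧ ∃ i, 0 < gg i := by
          set ghat : ι → ℝ := fun i => if h : i ∈ T then g ⟨i, h⟩ else 0 with hghat
          have hghat0 : ∀ i, i ∉ T → ghat i = 0 := fun i h => by simp [hghat, h]
          have hgsum : ∑ i, ghat i • v i = 0 := by
            rw [show ∑ i, ghat i • v i = ∑ i ∈ T, ghat i • v i from
              (Finset.sum_subset T.subset_univ (fun i _ h => by simp [hghat0 i h])).symm,
              ← Finset.sum_attach T (fun i => ghat i • v i)]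
            rw [← hg0]
            refine Finset.sum_congr rfl fun i _ => ?_
            simp [hghat, i.2]
          rcases lt_trichotomy (ghat i₁.1) 0 with h | h | h
          · exact ⟨-ghat, fun i hi => by simp [hghat0 i hi],
              by simp [neg_smul, hgsum, Finset.sum_neg_distrib], ⟨i₁.1, by simp only [Pi.neg_apply]; linarith⟩⟩
          · exfalso
            apply hi₁
            have : ghat i₁.1 = g i₁ := by simp [hghat, i₁.2]
            rw [← this, h]
          · exact ⟨ghat, hghat0, hgsum, ⟨i₁.1, h⟩⟩
        obtain ⟨gg, hgg0, hggsum, ipos, hipos⟩ := hrel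
        set P : Finset ι := univ.filter (fun i => 0 < gg i) with hP
        have hPne : P.Nonempty := ⟨ipos, by simp [hP, hipos]⟩
        obtain ⟨i₀, hi₀P, hmin⟩ := P.exists_min_image (fun i => lam i / gg i) hPne
        have hggi₀ : 0 < gg i₀ := by simpa [hP] using hi₀P
        set t : ℝ := lam i₀ / gg i₀ with hts
        have ht : 0 ≤ t := div_nonneg (hlam i₀) hggi₀.le
        set lam' : ι → ℝ := fun i => lam i - t * gg i with hlam'
        have hlam'0 : ∀ i, 0 ≤ lam' i := by
          intro i
          by_cases h : 0 < gg i
          · have := hmin i (by simp [hP, h])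
            have h2 : t * gg i ≤ lam i := by
              rw [← le_div_iff₀ h]; exact this
            simp [hlam']; linarith
          · push_neg at h
            have : t * gg i ≤ 0 := mul_nonpos_of_nonneg_of_nonpos ht h
            have := hlam i
            simp [hlam']; linarith
        have hsum' : ∑ i, lam' i • v i = ∑ i, lam i • v i := by
          simp only [hlam', sub_smul, Finset.sum_sub_distrib, mul_smul]
          rw [← Finset.smul_sum, hggsum, smul_zero, sub_zero]
        have hsupp : (univ.filter (fun i => lam' i ≠ 0)) ⊆ T.erase i₀ := by
          intro i hi
          simp only [mem_filter, mem_univ, true_and] at hi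
          have hiT : i ∈ T := by
            by_contra h
            have h1 : lam i = 0 := by
              by_contra hl; exact h (by simp [hT, hl])
            exact hi (by simp [hlam', h1, hgg0 i h])
          have : i ≠ i₀ := by
            rintro rfl
            apply hi
            simp [hlam', hts]
            field_simp
            ring
          exact Finset.mem_erase.mpr ⟨this, hiT⟩
        have hi₀T : i₀ ∈ T := by
          by_contra h
          have := hgg0 i₀ h
          linarith
        have hcard' : (univ.filter (fun i => lam' i ≠ 0)).card < k := by
          calc (univ.filter (fun i => lam' i ≠ 0)).card
              ≤ (T.erase i₀).card := Finset.card_le_card hsupp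
            _ < T.card := Finset.card_erase_lt_of_mem hi₀T
            _ ≤ k := hcard
        obtain ⟨S, hS1, hS2⟩ := IH _ hcard' lam' hlam'0 (le_refl _)
        exact ⟨S, hS1, by rwa [hsum'] at hS2⟩
  exact main (univ.filter (fun i => lam i ≠ 0)).card lam hlam (le_refl _)

lemma isClosed_coneHull_of_li (v : ι → Fin n → ℝ) (hv : LinearIndependent ℝ v) :
    IsClosed (coneHull v) := by
  classical
  let L : (ι → ℝ) →ₗ[ℝ] (Fin n → ℝ) :=
    { toFun := fun lam => ∑ i, lam i • v i
      map_add' := fun x y => by simp [add_smul, Finset.sum_add_distrib]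
      map_smul' := fun c x => by simp [Finset.smul_sum, mul_smul] }
  have hker : LinearMap.ker L = ⊥ := by
    rw [LinearMap.ker_eq_bot']
    intro m hm
    funext i
    exact Fintype.linearIndependent_iff.mp hv m hm i
  have hemb := LinearMap.isClosedEmbedding_of_injective (𝕜 := ℝ) (f := L) hker
  have himg : coneHull v = L '' {lam : ι → ℝ | ∀ i, 0 ≤ lam i} := by
    ext x
    constructor
    · rintro ⟨lam, hlam, rfl⟩; exact ⟨lam, hlam, rfl⟩
    · rintro ⟨lam, hlam, rfl⟩; exact ⟨lam, hlam, rfl⟩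
  rw [himg]
  refine hemb.isClosedMap _ ?_
  have : {lam : ι → ℝ | ∀ i, 0 ≤ lam i} = ⋂ i, (fun lam : ι → ℝ => lam i) ⁻¹' Set.Ici 0 := by
    ext lam; simp [Set.mem_iInter]
  rw [this]
  exact isClosed_iInter fun i => (isClosed_Ici).preimage (continuous_apply i)

lemma isClosed_coneHull (v : ι → Fin n → ℝ) : IsClosed (coneHull v) := by
  classical
  have : coneHull v =
      ⋃ S ∈ {S : Finset ι | LinearIndependent ℝ (fun i : S => v i.1)},
        coneHull (fun i : S => v i.1) := by
    apply Set.Subset.antisymm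
    · intro x hx
      obtain ⟨S, hS1, hS2⟩ := coneHull_caratheodory v hx
      exact Set.mem_biUnion hS1 hS2
    · intro x hx
      simp only [Set.mem_iUnion] at hx
      obtain ⟨S, _, hx⟩ := hx
      exact coneHull_subtype_subset v S hx
  rw [this]
  exact Set.Finite.isClosed_biUnion (Set.toFinite _)
    (fun S hS => isClosed_coneHull_of_li _ hS)

open scoped RealInnerProductSpace in
lemma farkas (v : ι → Fin n → ℝ) (g : Fin n → ℝ) (hg : g ∉ coneHull v) :
    ∃ m : Fin n → ℝ, (∀ x ∈ coneHull v, 0 ≤ innerR m x) ∧ innerR m g < 0 := by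
  let K : ProperCone ℝ (EuclideanSpace ℝ (Fin n)) :=
    { carrier := {x | WithLp.ofLp x ∈ coneHull v}
      zero_mem' := coneHull_zero_mem v
      smul_mem' := fun c x hx => coneHull_smul_mem c.2 hx
      add_mem' := fun hx hy => coneHull_add_mem hx hy
      isClosed' := (isClosed_coneHull v).preimage (PiLp.continuous_ofLp 2 _) }
  have hinner : ∀ x y : EuclideanSpace ℝ (Fin n), ⟪x, y⟫ = innerR y x := by
    intro x y
    simp [PiLp.inner_apply, RCLike.inner_apply, innerR, mul_comm]
  obtain ⟨y, hy1, hy2⟩ :=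
    K.hyperplane_separation' (x₀ := WithLp.toLp 2 g) hg
  refine ⟨WithLp.ofLp y, fun x hx => ?_, ?_⟩
  · have := hy1 (WithLp.toLp 2 x) hx
    rwa [hinner] at this
  · rwa [hinner] at hy2

end ConeHull

/-- **Separation Lemma.** If `σ₁`, `σ₂` are rational polyhedral cones in `ℝ^n` whose
intersection `τ = σ₁ ∩ σ₂` is a face of both, then there exists
`m ∈ σ₁^∨ ∩ (−σ₂)^∨` with `τ = σ₁ ∩ H_m = σ₂ ∩ H_m`, where
`H_m = {x : ⟨m,x⟩ = 0}`. -/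
theorem separation_lemma {n r₁ r₂ : ℕ} (a : Fin r₁ → Fin n → ℤ) (b : Fin r₂ → Fin n → ℤ)
    (τ : Set (Fin n → ℝ)) (hτ : τ = ratCone a ∩ ratCone b)
    (hface₁ : ∃ m ∈ dualCone (ratCone a), τ = ratCone a ∩ {x | innerR m x = 0})
    (hface₂ : ∃ m ∈ dualCone (ratCone b), τ = ratCone b ∩ {x | innerR m x = 0}) :
    ∃ m : Fin n → ℝ, m ∈ dualCone (ratCone a) ∧ m ∈ dualCone ((fun x => -x) '' ratCone b) ∧
      τ = ratCone a ∩ {x | innerR m x = 0} ∧ τ = ratCone b ∩ {x | innerR m x = 0} := by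
  classical
  obtain ⟨m₁, hm₁d, hm₁eq⟩ := hface₁
  obtain ⟨m₂, hm₂d, hm₂eq⟩ := hface₂
  set c : (Fin r₁ ⊕ Fin r₂) → Fin n → ℝ :=
    Sum.elim (fun i => coeR (a i)) (fun j => -coeR (b j)) with hc
  set γ : Set (Fin n → ℝ) := coneHull c with hγ
  have hσ₁γ : ratCone a ⊆ γ := by
    rintro x ⟨lam, hlam, rfl⟩
    refine ⟨Sum.elim lam 0, ?_, ?_⟩
    · intro k
      cases k with
      | inl i => simpa using hlam i
      | inr j => simp
    · rw [Fintype.sum_sum_type]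
      simp [hc]
  have hσ₂γ : ∀ y ∈ ratCone b, -y ∈ γ := by
    rintro y ⟨lam, hlam, rfl⟩
    refine ⟨Sum.elim 0 lam, ?_, ?_⟩
    · intro k
      cases k with
      | inl i => simp
      | inr j => simpa using hlam j
    · rw [Fintype.sum_sum_type]
      simp [hc, smul_neg, Finset.sum_neg_distrib]
  have hdecomp : ∀ u ∈ γ, ∃ x ∈ ratCone a, ∃ y ∈ ratCone b, u = x - y := by
    rintro u ⟨lam, hlam, rfl⟩
    refine ⟨∑ i, lam (Sum.inl i) • coeR (a i),
      ⟨fun i => lam (Sum.inl i), fun i => hlam _, rfl⟩,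
      ∑ j, lam (Sum.inr j) • coeR (b j),
      ⟨fun j => lam (Sum.inr j), fun j => hlam _, rfl⟩, ?_⟩
    rw [Fintype.sum_sum_type]
    simp [hc, smul_neg, Finset.sum_neg_distrib, sub_eq_add_neg]
  have hck : ∀ k, c k ∈ γ := coneHull_gen_mem c
  have hch : ∀ k : Fin r₁ ⊕ Fin r₂, ∃ mk : Fin n → ℝ,
      (∀ x ∈ γ, 0 ≤ innerR mk x) ∧ (-c k ∉ γ → 0 < innerR mk (c k)) := by
    intro k
    by_cases h : -c k ∈ γ
    · exact ⟨0, fun x _ => by simp [innerR], fun h' => absurd h h'⟩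
    · obtain ⟨mk, h1, h2⟩ := farkas c (-c k) h
      rw [innerR_neg] at h2
      exact ⟨mk, h1, fun _ => by linarith⟩
  choose M hM1 hM2 using hch
  set m : Fin n → ℝ := ∑ k, M k with hm
  have hmdual : ∀ u ∈ γ, 0 ≤ innerR m u := by
    intro u hu
    rw [hm, innerR_sum_left]
    exact Finset.sum_nonneg fun k _ => hM1 k u hu
  have hmpos : ∀ k, -c k ∉ γ → 0 < innerR m (c k) := by
    intro k hk
    rw [hm, innerR_sum_left]
    exact Finset.sum_pos' (fun j _ => hM1 j _ (hck k)) ⟨k, Finset.mem_univ k, hM2 k hk⟩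
  have hker : ∀ u ∈ γ, innerR m u = 0 → -u ∈ γ := by
    rintro u ⟨lam, hlam, rfl⟩ h0
    rw [innerR_sum] at h0
    simp only [innerR_smul] at h0
    have hterm : ∀ k ∈ Finset.univ, lam k * innerR m (c k) = 0 :=
      (Finset.sum_eq_zero_iff_of_nonneg
        (fun k _ => mul_nonneg (hlam k) (hmdual _ (hck k)))).mp h0
    have hneg : -(∑ k, lam k • c k) = ∑ k, lam k • (-c k) := by
      simp [smul_neg, Finset.sum_neg_distrib]
    rw [hneg]
    refine coneHull_sum_mem _ fun k _ => ?_
    by_cases hkγ : -c k ∈ γ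
    · exact coneHull_smul_mem (hlam k) hkγ
    · have : lam k = 0 := by
        have h1 := hterm k (Finset.mem_univ k)
        have h2 := hmpos k hkγ
        nlinarith [hlam k]
      simp only [this, zero_smul]
      exact coneHull_zero_mem c
  have hlinτ : ∀ w, w ∈ γ → -w ∈ γ → ∃ x ∈ τ, ∃ y ∈ τ, w = x - y := by
    intro w hw hw'
    obtain ⟨x, hx, y, hy, hxy⟩ := hdecomp w hw
    obtain ⟨x', hx', y', hy', hxy'⟩ := hdecomp (-w) hw'
    have hz : x + x' = y + y' := by
      have h0 : (x - y) + (x' - y') = 0 := by rw [← hxy, ← hxy']; exact add_neg_cancel w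
      have h1 : x + x' - (y + y') = (x - y) + (x' - y') := by abel
      rw [h0] at h1
      exact sub_eq_zero.mp h1
    have hzτ : x + x' ∈ τ := by
      rw [hτ]
      refine ⟨coneHull_add_mem hx hx', ?_⟩
      rw [hz]
      exact coneHull_add_mem hy hy'
    have hxτ : x ∈ τ := by
      have h1 : innerR m₁ (x + x') = 0 := by
        rw [hm₁eq] at hzτ; exact hzτ.2
      rw [innerR_add] at h1
      have hx0 : 0 ≤ innerR m₁ x := hm₁d x hx
      have hx'0 : 0 ≤ innerR m₁ x' := hm₁d x' hx'
      rw [hm₁eq]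
      exact ⟨hx, by simp only [Set.mem_setOf_eq]; linarith⟩
    have hyτ : y ∈ τ := by
      have hzτ' : y + y' ∈ τ := hz ▸ hzτ
      have h1 : innerR m₂ (y + y') = 0 := by
        rw [hm₂eq] at hzτ'; exact hzτ'.2
      rw [innerR_add] at h1
      have hy0 : 0 ≤ innerR m₂ y := hm₂d y hy
      have hy'0 : 0 ≤ innerR m₂ y' := hm₂d y' hy'
      rw [hm₂eq]
      exact ⟨hy, by simp only [Set.mem_setOf_eq]; linarith⟩
    exact ⟨x, hxτ, y, hyτ, hxy⟩
  have habs₁ : ∀ u ∈ ratCone a, ∀ x ∈ τ, ∀ y ∈ τ, u = x - y → u ∈ τ := by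
    intro u hu x hx y hy hxy
    have hyσ : y ∈ ratCone a := by rw [hτ] at hy; exact hy.1
    have hxeq : x = u + y := by rw [hxy]; abel
    have h1 : innerR m₁ x = 0 := by rw [hm₁eq] at hx; exact hx.2
    rw [hxeq, innerR_add] at h1
    have h2 := hm₁d u hu
    have h3 := hm₁d y hyσ
    rw [hm₁eq]
    exact ⟨hu, by simp only [Set.mem_setOf_eq]; linarith⟩
  have habs₂ : ∀ u ∈ ratCone b, ∀ x ∈ τ, ∀ y ∈ τ, u = x - y → u ∈ τ := by
    intro u hu x hx y hy hxy
    have hyσ : y ∈ ratCone b := by rw [hτ] at hy; exact hy.2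
    have hxeq : x = u + y := by rw [hxy]; abel
    have h1 : innerR m₂ x = 0 := by rw [hm₂eq] at hx; exact hx.2
    rw [hxeq, innerR_add] at h1
    have h2 := hm₂d u hu
    have h3 := hm₂d y hyσ
    rw [hm₂eq]
    exact ⟨hu, by simp only [Set.mem_setOf_eq]; linarith⟩
  have hsub : ∀ t ∈ τ, innerR m t = 0 := by
    intro t ht
    rw [hτ] at ht
    have h1 : 0 ≤ innerR m t := hmdual t (hσ₁γ ht.1)
    have h2 : 0 ≤ innerR m (-t) := hmdual _ (hσ₂γ t ht.2)
    rw [innerR_neg] at h2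
    linarith
  refine ⟨m, fun u hu => hmdual u (hσ₁γ hu), ?_, ?_, ?_⟩
  · rintro u ⟨y, hy, rfl⟩
    exact hmdual _ (hσ₂γ y hy)
  · apply Set.Subset.antisymm
    · intro t ht
      refine ⟨(hτ ▸ ht).1, hsub t ht⟩
    · rintro u ⟨hu, hu0⟩
      simp only [Set.mem_setOf_eq] at hu0
      have huγ := hσ₁γ hu
      obtain ⟨x, hx, y, hy, hxy⟩ := hlinτ u huγ (hker u huγ hu0)
      exact habs₁ u hu x hx y hy hxy
  · apply Set.Subset.antisymm
    · intro t ht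
      refine ⟨(hτ ▸ ht).2, hsub t ht⟩
    · rintro u ⟨hu, hu0⟩
      simp only [Set.mem_setOf_eq] at hu0
      have hnegγ : -u ∈ γ := hσ₂γ u hu
      have hn0 : innerR m (-u) = 0 := by rw [innerR_neg, hu0, neg_zero]
      have huγ : u ∈ γ := by
        have := hker (-u) hnegγ hn0
        rwa [neg_neg] at this
      obtain ⟨x, hx, y, hy, hxy⟩ := hlinτ (-u) hnegγ (by rwa [neg_neg])
      have : u = y - x := by
        rw [← neg_neg u, hxy]; abel
      exact habs₂ u hu y hy x hx this
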